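/- For real symmetric positive definite 2×2 matrices M₁ and M₂, equality √det(M₁ + M₂) = √det(M₁) + √det(M₂) holds if and only if M₁ and M₂ are positive real multiples of each other, i.e. there exists c > 0 with M₂ = c • M₁. -/

import Mathlib

open Matrix

private lemma key_scalar (a b c d e f : ℝ) (ha : 0 < a) (hc : 0 < c)
    (hp : b^2 < a*c)
    (h : (a*f + c*d - 2*b*e)^2 = 4*(a*c - b^2)*(d*f - e^2)) :
    a*e = b*d ∧ a*f = c*d := by
  set X := a*f - c*d with hX
  set Y := a*e - b*d with hY
  set Z := c*e - b*f with hZ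
  have hid : X^2 + 4*Y*Z = 0 := by rw [hX, hY, hZ]; nlinarith [h]
  have hYZ1 : Y*Z ≤ 0 := by nlinarith [sq_nonneg X]
  have hbX : b*X = c*Y - a*Z := by rw [hX, hY, hZ]; ring
  have hYZ2 : 0 ≤ Y*Z := by
    by_contra hcon
    push_neg at hcon
    have hsq : (c*Y - a*Z)^2 = b^2 * X^2 := by rw [← hbX]; ring
    have h1 : X^2 = -(4*Y*Z) := by linarith
    have h2 : 0 < (a*c - b^2) * (-(Y*Z)) :=
      mul_pos (by nlinarith) (by linarith)
    nlinarith [sq_nonneg (a*Z + c*Y)]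
  have hYZ : Y*Z = 0 := le_antisymm hYZ1 hYZ2
  have hX0 : X = 0 := by nlinarith [sq_nonneg X]
  have hY0 : Y = 0 := by
    have hcy : c*Y - a*Z = 0 := by rw [← hbX, hX0]; ring
    rcases mul_eq_zero.mp hYZ with h' | h'
    · exact h'
    · have : c * Y = 0 := by nlinarith
      exact (mul_eq_zero.mp this).resolve_left hc.ne'
  constructor
  · linarith [hY0.symm ▸ (by rw [hY] : Y = a*e - b*d)]
  · linarith [hX0.symm ▸ (by rw [hX] : X = a*f - c*d)]

private lemma diag_pos' {M : Matrix (Fin 2) (Fin 2) ℝ} (h : M.PosDef) (i : Fin 2) :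
    0 < M i i := by
  have hx : (Pi.single i 1 : Fin 2 → ℝ) ≠ 0 := by
    intro hcon
    have := congrFun hcon i
    simp at this
  have := h.dotProduct_mulVec_pos hx
  simpa [dotProduct, mulVec, Pi.single_apply, Fin.sum_univ_two] using this

/-- For real symmetric positive definite `2 × 2` matrices, equality
`√det (M₁ + M₂) = √det M₁ + √det M₂` holds iff `M₁` and `M₂` are positive real
multiples of each other. -/
theorem sqrt_det_add_eq_iff (M₁ M₂ : Matrix (Fin 2) (Fin 2) ℝ)
    (h₁s : M₁ᵀ = M₁) (h₂s : M₂ᵀ = M₂) (h₁ : M₁.PosDef) (h₂ : M₂.PosDef) :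
    Real.sqrt (M₁ + M₂).det = Real.sqrt M₁.det + Real.sqrt M₂.det ↔
      ∃ c : ℝ, 0 < c ∧ M₂ = c • M₁ := by
  have hD1 : 0 < M₁.det := h₁.det_pos
  have hD2 : 0 < M₂.det := h₂.det_pos
  constructor
  · intro hs
    have hadd : (M₁ + M₂).PosDef := by
      refine Matrix.PosDef.of_dotProduct_mulVec_pos (h₁.1.add h₂.1) fun x hx => ?_
      have := add_pos (h₁.dotProduct_mulVec_pos hx) (h₂.dotProduct_mulVec_pos hx)
      simpa only [add_mulVec, dotProduct_add] using this
    have hD : 0 < (M₁ + M₂).det := hadd.det_pos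
    have e1 : Real.sqrt M₁.det ^ 2 = M₁.det := Real.sq_sqrt hD1.le
    have e2 : Real.sqrt M₂.det ^ 2 = M₂.det := Real.sq_sqrt hD2.le
    have hDe : (M₁ + M₂).det = (Real.sqrt M₁.det + Real.sqrt M₂.det)^2 := by
      rw [← hs, Real.sq_sqrt hD.le]
    have hT : (M₁ + M₂).det - M₁.det - M₂.det
        = 2 * (Real.sqrt M₁.det * Real.sqrt M₂.det) := by
      rw [hDe]; nlinarith [e1, e2]
    have hT2 : ((M₁ + M₂).det - M₁.det - M₂.det)^2 = 4 * M₁.det * M₂.det := by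
      rw [hT]; nlinarith [e1, e2]
    have hb : M₁ 1 0 = M₁ 0 1 := congrFun (congrFun h₁s 0) 1
    have he : M₂ 1 0 = M₂ 0 1 := congrFun (congrFun h₂s 0) 1
    have ha : 0 < M₁ 0 0 := diag_pos' h₁ 0
    have hc : 0 < M₁ 1 1 := diag_pos' h₁ 1
    have hd : 0 < M₂ 0 0 := diag_pos' h₂ 0
    have hdet1 : M₁.det = M₁ 0 0 * M₁ 1 1 - (M₁ 0 1)^2 := by
      rw [Matrix.det_fin_two, hb]; ring
    have hdet2 : M₂.det = M₂ 0 0 * M₂ 1 1 - (M₂ 0 1)^2 := by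
      rw [Matrix.det_fin_two, he]; ring
    have hdetS : (M₁ + M₂).det
        = (M₁ 0 0 + M₂ 0 0) * (M₁ 1 1 + M₂ 1 1) - (M₁ 0 1 + M₂ 0 1)^2 := by
      rw [Matrix.det_fin_two]
      simp only [Matrix.add_apply]
      rw [hb, he]; ring
    have hp : (M₁ 0 1)^2 < M₁ 0 0 * M₁ 1 1 := by rw [hdet1] at hD1; linarith
    have hkey : (M₁ 0 0 * M₂ 1 1 + M₁ 1 1 * M₂ 0 0 - 2 * M₁ 0 1 * M₂ 0 1)^2
        = 4 * (M₁ 0 0 * M₁ 1 1 - (M₁ 0 1)^2) * (M₂ 0 0 * M₂ 1 1 - (M₂ 0 1)^2) := by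
      rw [hdet1, hdet2, hdetS] at hT2
      nlinarith [hT2]
    obtain ⟨hae, haf⟩ := key_scalar (M₁ 0 0) (M₁ 0 1) (M₁ 1 1) (M₂ 0 0) (M₂ 0 1)
      (M₂ 1 1) ha hc hp hkey
    have ha' : M₁ 0 0 ≠ 0 := ha.ne'
    refine ⟨M₂ 0 0 / M₁ 0 0, div_pos hd ha, ?_⟩
    ext i j
    rw [Matrix.smul_apply, smul_eq_mul]
    fin_cases i <;> fin_cases j
    · show M₂ 0 0 = M₂ 0 0 / M₁ 0 0 * M₁ 0 0; field_simp
    · show M₂ 0 1 = M₂ 0 0 / M₁ 0 0 * M₁ 0 1; field_simp; linarith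
    · show M₂ 1 0 = M₂ 0 0 / M₁ 0 0 * M₁ 1 0; rw [hb, he]; field_simp; linarith
    · show M₂ 1 1 = M₂ 0 0 / M₁ 0 0 * M₁ 1 1; field_simp; linarith
  · rintro ⟨k, hk, rfl⟩
    have h1 : M₁ + k • M₁ = (1 + k) • M₁ := by rw [add_smul, one_smul]
    rw [h1, Matrix.det_smul, Matrix.det_smul]
    simp only [Fintype.card_fin]
    rw [Real.sqrt_mul (by positivity), Real.sqrt_mul (by positivity),
      Real.sqrt_sq (by positivity : (0:ℝ) ≤ 1 + k), Real.sqrt_sq hk.le]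
    ring
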